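/- arXiv:1206.5581 — 2 statements merged into one kernel-verified Lean document; each statement's English description precedes it below -/
import Mathlib

section
/- If M is a meager subset of a topological space (X, τ), then φ⁻¹[M] is meager in X(τ), where φ : X(τ) → X is any function satisfying φ(x) ∈ ⋂_{n<ω} x(n) for every x ∈ X(τ). -/
open Set Topology

/-- The set of nonempty open subsets of `X` (denoted `τ⁺` in the paper). -/
abbrev PosOpen (X : Type) [TopologicalSpace X] : Type :=
  {U : Set X // IsOpen U ∧ U.Nonempty}

/-- `τ⁺` carries the discrete topology. -/
instance (priority := high) PosOpen.topology (X : Type) [TopologicalSpace X] :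
    TopologicalSpace (PosOpen X) := ⊥

/-- `X(τ) = {x ∈ (τ⁺)^ω : ⋂ₙ x(n) ≠ ∅}`, a subspace of the product `(τ⁺)^ω`. -/
abbrev SeqSpace (X : Type) [TopologicalSpace X] : Type :=
  {x : ℕ → PosOpen X // (⋂ n, ((x n).1 : Set X)).Nonempty}

lemma preimage_nwd (X : Type) [TopologicalSpace X]
    (φ : SeqSpace X → X) (hφ : ∀ x : SeqSpace X, φ x ∈ ⋂ n, ((x.1 n).1 : Set X))
    (N : Set X) (hN : IsNowhereDense N) : IsNowhereDense (φ ⁻¹' N) := by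
  rw [IsNowhereDense, eq_empty_iff_forall_notMem]
  intro x hx
  -- get an open set in the ambient product space
  obtain ⟨O, hO, hOeq⟩ := isOpen_induced_iff.mp (isOpen_interior
    (s := closure (φ ⁻¹' N)))
  have hxO : x.1 ∈ O := by rw [← hOeq] at hx; exact hx
  obtain ⟨I, u, hu, hIu⟩ := isOpen_pi_iff.mp hO x.1 hxO
  set k : ℕ := I.sup id + 1 with hk
  have hcyl : ∀ f : ℕ → PosOpen X, (∀ i < k, f i = x.1 i) → f ∈ O := by
    intro f hf
    apply hIu
    intro i hi
    have : i < k := Nat.lt_succ_of_le (Finset.le_sup (f := id) hi)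
    rw [hf i this]
    exact (hu i hi).2
  -- the finite intersection
  set V : Set X := ⋂ i ∈ Finset.range k, ((x.1 i).1 : Set X) with hV
  have hVopen : IsOpen V := isOpen_biInter_finset fun i _ => (x.1 i).2.1
  obtain ⟨p, hp⟩ := x.2
  have hpV : p ∈ V := by
    simp only [hV, mem_iInter]
    intro i _
    exact mem_iInter.mp hp i
  -- carve out a part disjoint from closure N
  set W : Set X := V ∩ (closure N)ᶜ with hW
  have hWopen : IsOpen W := hVopen.inter isClosed_closure.isOpen_compl
  have hWne : W.Nonempty := by
    by_contra h
    rw [not_nonempty_iff_eq_empty] at h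
    have hsub : V ⊆ closure N := by
      intro a ha
      by_contra hc
      exact (eq_empty_iff_forall_notMem.mp h a) ⟨ha, hc⟩
    have : p ∈ interior (closure N) :=
      interior_maximal hsub hVopen hpV
    rw [hN] at this
    exact this
  -- build the new sequence
  set y : ℕ → PosOpen X := fun i => if h : i < k then x.1 i else ⟨W, hWopen, hWne⟩
    with hy
  obtain ⟨q, hqW⟩ := hWne
  have hyq : ∀ n, q ∈ ((y n).1 : Set X) := by
    intro n
    by_cases h : n < k
    · simp only [hy, dif_pos h]
      have : q ∈ V := hqW.1
      simp only [hV, mem_iInter] at this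
      exact this n (Finset.mem_range.mpr h)
    · simp only [hy, dif_neg h]
      exact hqW
  set Y : SeqSpace X := ⟨y, ⟨q, mem_iInter.mpr hyq⟩⟩ with hY
  have hYmem : Y ∈ interior (closure (φ ⁻¹' N)) := by
    rw [← hOeq]
    exact hcyl y (fun i hi => dif_pos hi)
  have hYcl : Y ∈ closure (φ ⁻¹' N) := interior_subset hYmem
  -- the cylinder neighborhood fixing coordinates up to k
  set U : Set (SeqSpace X) :=
    Subtype.val ⁻¹' ((Finset.range (k+1) : Set ℕ).pi (fun i => {y i})) with hU
  have hUopen : IsOpen U := by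
    apply IsOpen.preimage continuous_subtype_val
    apply isOpen_set_pi (Finset.finite_toSet _)
    intro i _
    have : DiscreteTopology (PosOpen X) := ⟨rfl⟩
    exact isOpen_discrete _
  have hYU : Y ∈ U := by
    intro i _
    rfl
  obtain ⟨z, hzU, hzN⟩ := (mem_closure_iff.mp hYcl U hUopen hYU)
  have hzk : z.1 k = y k := hzU k (by simp)
  have hyk : ((y k).1 : Set X) = W := by simp [hy]
  have hφz : φ z ∈ W := by
    have := mem_iInter.mp (hφ z) k
    rw [hzk, hyk] at this
    exact this
  exact hφz.2 (subset_closure hzN)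

theorem stmt2 (X : Type) [TopologicalSpace X]
    (φ : SeqSpace X → X) (hφ : ∀ x : SeqSpace X, φ x ∈ ⋂ n, ((x.1 n).1 : Set X))
    (M : Set X) (hM : IsMeagre M) :
    IsMeagre (φ ⁻¹' M) := by
  rw [isMeagre_iff_countable_union_isNowhereDense] at hM ⊢
  obtain ⟨S, hSnwd, hScnt, hSsub⟩ := hM
  refine ⟨(fun t => φ ⁻¹' t) '' S, ?_, hScnt.image _, ?_⟩
  · rintro t ⟨s, hs, rfl⟩
    exact preimage_nwd X φ hφ s (hSnwd s hs)
  · intro z hz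
    obtain ⟨t, ht, hzt⟩ := hSsub hz
    exact ⟨φ ⁻¹' t, ⟨t, ht, rfl⟩, hzt⟩
end

section
/- A subset X of the Ellentuck space is nowhere dense if and only if it is Ramsey null: for every nonempty basic set [a, A] there exists B ∈ [A]^ω such that [a, B] ∩ X = ∅. -/
open Set Topology

/-- The points of the Ellentuck space: infinite subsets of `ω`. -/
abbrev EllPt : Type := {A : Set ℕ // A.Infinite}

/-- The basic set `[a, A] = {B : a ⊑ B ⊆ a ∪ A}`, where `a ⊑ B` means `a` is an
initial segment of `B` (i.e. `a ⊆ B` and every element of `B \ a` exceeds every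
element of `a`). -/
def EBasic (a : Finset ℕ) (A : EllPt) : Set EllPt :=
  {B | ↑a ⊆ B.1 ∧ B.1 ⊆ ↑a ∪ A.1 ∧ ∀ m ∈ a, ∀ n ∈ B.1, n ∉ a → m < n}

/-- The Ellentuck topology, generated by the basic sets `[a, A]`. -/
instance (priority := high) EllentuckSpace : TopologicalSpace EllPt :=
  TopologicalSpace.generateFrom {s | ∃ a A, s = EBasic a A}

namespace EllAux

/-- The tail of `A` above `n`. -/
def tl (A : EllPt) (n : ℕ) : EllPt :=
  ⟨A.1 \ Set.Iic n, A.2.diff (Set.finite_Iic n)⟩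

lemma tl_subset (A : EllPt) (n : ℕ) : (tl A n).1 ⊆ A.1 := fun _ h => h.1

lemma lt_of_mem_tl {A : EllPt} {n m : ℕ} (h : m ∈ (tl A n).1) : n < m :=
  lt_of_not_ge fun hle => h.2 hle

lemma mem_tl {A : EllPt} {n m : ℕ} (hA : m ∈ A.1) (hn : n < m) : m ∈ (tl A n).1 :=
  ⟨hA, fun hle => absurd hn (not_lt.2 hle)⟩

lemma tl_mono {A B : EllPt} (h : A.1 ⊆ B.1) (n : ℕ) : (tl A n).1 ⊆ (tl B n).1 :=
  fun _ hy => ⟨h hy.1, hy.2⟩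

/-- `x` minus a finite set, as a point of the Ellentuck space. -/
def dif (x : EllPt) (b : Finset ℕ) : EllPt := ⟨x.1 \ ↑b, x.2.diff b.finite_toSet⟩

/-- `b` is an initial segment of `x`. -/
def Stem (b : Finset ℕ) (x : EllPt) : Prop :=
  ↑b ⊆ x.1 ∧ ∀ m ∈ b, ∀ y ∈ x.1, y ∉ b → m < y

lemma mem_basic_dif {b : Finset ℕ} {x : EllPt} (h : Stem b x) : x ∈ EBasic b (dif x b) := by
  refine ⟨h.1, ?_, h.2⟩
  intro y hy
  by_cases hyb : y ∈ (b : Set ℕ)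
  · exact Or.inl hyb
  · exact Or.inr ⟨hy, hyb⟩

lemma basic_dif_subset {a : Finset ℕ} {A x : EllPt} (hx : x ∈ EBasic a A)
    {b : Finset ℕ} (hab : a ⊆ b) (hb : ↑b ⊆ x.1) :
    EBasic b (dif x b) ⊆ EBasic a A := by
  intro y hy
  have hyx : y.1 ⊆ x.1 := by
    intro z hz
    rcases hy.2.1 hz with h | h
    · exact hb h
    · exact h.1
  exact ⟨(Finset.coe_subset.2 hab).trans hy.1, hyx.trans hx.2.1,
    fun m hm z hz hza => hx.2.2 m hm z (hyx hz) hza⟩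

lemma isBasis : TopologicalSpace.IsTopologicalBasis {s : Set EllPt | ∃ a A, s = EBasic a A} := by
  refine ⟨?_, ?_, rfl⟩
  · rintro t₁ ⟨a, A, rfl⟩ t₂ ⟨b, B, rfl⟩ x ⟨hx1, hx2⟩
    have hsub : ↑(a ∪ b) ⊆ x.1 := by
      rw [Finset.coe_union]
      exact Set.union_subset hx1.1 hx2.1
    have hstem : Stem (a ∪ b) x := by
      refine ⟨hsub, ?_⟩
      intro m hm y hy hyab
      have hya : y ∉ a := fun h => hyab (Finset.mem_union_left _ h)
      have hyb : y ∉ b := fun h => hyab (Finset.mem_union_right _ h)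
      rcases Finset.mem_union.1 hm with h | h
      · exact hx1.2.2 m h y hy hya
      · exact hx2.2.2 m h y hy hyb
    refine ⟨EBasic (a ∪ b) (dif x (a ∪ b)), ⟨_, _, rfl⟩, mem_basic_dif hstem, ?_⟩
    intro y hy
    exact ⟨basic_dif_subset hx1 Finset.subset_union_left hsub hy,
      basic_dif_subset hx2 Finset.subset_union_right hsub hy⟩
  · ext x
    simp only [Set.mem_sUnion, Set.mem_univ, iff_true]
    refine ⟨EBasic ∅ x, ⟨∅, x, rfl⟩, ?_⟩
    exact ⟨by simp, by simp, by simp⟩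

lemma isOpen_basic (a : Finset ℕ) (A : EllPt) : IsOpen (EBasic a A) :=
  isBasis.isOpen ⟨a, A, rfl⟩

lemma basic_nonempty (a : Finset ℕ) (A : EllPt) : (EBasic a A).Nonempty := by
  refine ⟨⟨↑a ∪ (tl A (a.sup id)).1, ((tl A (a.sup id)).2.mono Set.subset_union_right :)⟩, ?_, ?_, ?_⟩
  · exact Set.subset_union_left
  · exact Set.union_subset_union_right _ (tl_subset _ _)
  · intro m hm n hn hna
    rcases hn with h | h
    · exact absurd h hna
    · exact lt_of_le_of_lt (Finset.le_sup (f := id) hm) (lt_of_mem_tl h)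

lemma basic_mono {a : Finset ℕ} {B A : EllPt} (h : B.1 ⊆ A.1) : EBasic a B ⊆ EBasic a A :=
  fun y hy => ⟨hy.1, hy.2.1.trans (Set.union_subset_union_right _ h), hy.2.2⟩

lemma open_point {D : Set EllPt} (hD : IsOpen D) {x : EllPt} (hxD : x ∈ D)
    {a : Finset ℕ} (ha : Stem a x) :
    ∃ b : Finset ℕ, a ⊆ b ∧ Stem b x ∧ EBasic b (dif x b) ⊆ D := by
  obtain ⟨t, ⟨c, C, rfl⟩, hxt, htD⟩ := isBasis.isOpen_iff.1 hD x hxD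
  have hsub : ↑(a ∪ c) ⊆ x.1 := by
    rw [Finset.coe_union]
    exact Set.union_subset ha.1 hxt.1
  have hstem : Stem (a ∪ c) x := by
    refine ⟨hsub, ?_⟩
    intro m hm y hy hyac
    have hya : y ∉ a := fun h => hyac (Finset.mem_union_left _ h)
    have hyc : y ∉ c := fun h => hyac (Finset.mem_union_right _ h)
    rcases Finset.mem_union.1 hm with h | h
    · exact ha.2 m h y hy hya
    · exact hxt.2.2 m h y hy hyc
  exact ⟨a ∪ c, Finset.subset_union_left, hstem,
    (basic_dif_subset hxt Finset.subset_union_right hsub).trans htD⟩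

def good (D : Set EllPt) (b : Finset ℕ) (B : EllPt) : Prop :=
  ∃ C : EllPt, C.1 ⊆ B.1 ∧ EBasic b C ⊆ D

lemma not_good_mono {D : Set EllPt} {b : Finset ℕ} {B B' : EllPt} (h : B'.1 ⊆ B.1)
    (hg : ¬ good D b B) : ¬ good D b B' :=
  fun ⟨C, hC, hCD⟩ => hg ⟨C, hC.trans h, hCD⟩

/-- dependent-choice style sequence builder. -/
lemma dc {α : Type} (R : α → α → Prop) (init : α) (h : ∀ s, ∃ t, R s t) :
    ∃ f : ℕ → α, f 0 = init ∧ ∀ k, R (f k) (f (k+1)) := by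
  choose g hg using h
  refine ⟨fun k => g^[k] init, rfl, fun k => ?_⟩
  show R (g^[k] init) (g^[k+1] init)
  rw [Function.iterate_succ_apply']
  exact hg _

lemma weak {D : Set EllPt} {b : Finset ℕ} {B : EllPt} (hbad : ¬ good D b B) :
    ∃ n ∈ B.1, ∃ B₁ : EllPt, B₁.1 ⊆ (tl B n).1 ∧ ¬ good D (insert n b) B₁ := by
  by_contra hcon
  push_neg at hcon
  -- hcon : ∀ n ∈ B.1, ∀ B₁, B₁.1 ⊆ (tl B n).1 → good D (insert n b) B₁
  set α := {p : ℕ × EllPt // p.1 ∈ B.1 ∧ p.2.1 ⊆ (tl B p.1).1 ∧ EBasic (insert p.1 b) p.2 ⊆ D}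
    with hα
  obtain ⟨n₀, hn₀⟩ := B.2.nonempty
  obtain ⟨C₀, hC₀s, hC₀D⟩ := hcon n₀ hn₀ (tl B n₀) subset_rfl
  have step : ∀ s : α, ∃ t : α, t.1.1 ∈ s.1.2.1 ∧ t.1.2.1 ⊆ (tl s.1.2 t.1.1).1 := by
    rintro ⟨⟨n, C⟩, hnB, hCs, hCD⟩
    obtain ⟨n', hn'⟩ := C.2.nonempty
    have hCB : C.1 ⊆ B.1 := hCs.trans (tl_subset _ _)
    have hn'B : n' ∈ B.1 := hCB hn'
    obtain ⟨C', hC's, hC'D⟩ := hcon n' hn'B (tl C n') (tl_mono hCB n')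
    exact ⟨⟨(n', C'), hn'B, hC's.trans (tl_mono hCB n'), hC'D⟩, hn', hC's⟩
  obtain ⟨f, hf0, hfR⟩ := dc _ ⟨(n₀, C₀), hn₀, hC₀s, hC₀D⟩ step
  set ν : ℕ → ℕ := fun k => (f k).1.1 with hνdef
  set E : ℕ → EllPt := fun k => (f k).1.2 with hEdef
  have hmem : ∀ k, ν k ∈ B.1 := fun k => (f k).2.1
  have hEsub : ∀ k, (E k).1 ⊆ (tl B (ν k)).1 := fun k => (f k).2.2.1
  have hED : ∀ k, EBasic (insert (ν k) b) (E k) ⊆ D := fun k => (f k).2.2.2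
  have hRel1 : ∀ k, ν (k+1) ∈ (E k).1 := fun k => (hfR k).1
  have hRel2 : ∀ k, (E (k+1)).1 ⊆ (tl (E k) (ν (k+1))).1 := fun k => (hfR k).2
  have hmono : StrictMono ν :=
    strictMono_nat_of_lt_succ fun k => lt_of_mem_tl (hEsub k (hRel1 k))
  have hanti : ∀ k j, k ≤ j → (E j).1 ⊆ (E k).1 := by
    intro k j hkj
    induction j, hkj using Nat.le_induction with
    | base => exact subset_rfl
    | succ j hkj ih => exact ((hRel2 j).trans (tl_subset _ _)).trans ih
  have hνE : ∀ k j, k < j → ν j ∈ (E k).1 := by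
    intro k j h
    cases j with
    | zero => omega
    | succ m => exact hanti k m (by omega) (hRel1 m)
  apply hbad
  refine ⟨⟨Set.range ν, Set.infinite_range_of_injective hmono.injective⟩, ?_, ?_⟩
  · rintro _ ⟨k, rfl⟩; exact hmem k
  · intro x hx
    have hne : (x.1 \ ↑b).Nonempty := (x.2.diff b.finite_toSet).nonempty
    have hm : sInf (x.1 \ ↑b) ∈ x.1 \ ↑b := Nat.sInf_mem hne
    set m := sInf (x.1 \ ↑b)
    have hmB : m ∈ Set.range ν := by
      rcases hx.2.1 hm.1 with h | h
      · exact absurd h hm.2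
      · exact h
    obtain ⟨k, hk⟩ := hmB
    apply hED k
    refine ⟨?_, ?_, ?_⟩
    · intro z hz
      simp only [Finset.coe_insert, Set.mem_insert_iff, Finset.mem_coe] at hz
      rcases hz with rfl | h
      · exact hk ▸ hm.1
      · exact hx.1 h
    · intro z hz
      by_cases hzb : z ∈ (b : Set ℕ)
      · exact Or.inl (by simp [hzb])
      · have hzd : z ∈ x.1 \ ↑b := ⟨hz, hzb⟩
        have hmz : m ≤ z := Nat.sInf_le hzd
        rcases hx.2.1 hz with h | h
        · exact absurd h hzb
        · obtain ⟨i, hi⟩ := h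
          rcases eq_or_lt_of_le hmz with heq | hlt
          · exact Or.inl (by simp [← heq, ← hk])
          · rw [← hk, ← hi] at hlt
            exact Or.inr (hi ▸ hνE k i (hmono.lt_iff_lt.1 hlt))
    · intro m' hm' z hz hzni
      have hznb : z ∉ b := fun h => hzni (Finset.mem_insert_of_mem h)
      have hzne : z ≠ ν k := fun h => hzni (h ▸ Finset.mem_insert_self _ _)
      rcases Finset.mem_insert.1 hm' with rfl | h
      · have hmz : m ≤ z := Nat.sInf_le ⟨hz, fun h => hznb h⟩
        rw [hk]
        rcases eq_or_lt_of_le hmz with heq | hlt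
        · exact absurd (hk.trans heq).symm hzne
        · exact hlt
      · exact hx.2.2 m' h z hz (fun hh => hznb hh)

lemma strong {D : Set EllPt} {b : Finset ℕ} {B : EllPt} (hbad : ¬ good D b B) :
    ∃ B' : EllPt, B'.1 ⊆ B.1 ∧ ∀ y ∈ B'.1, ¬ good D (insert y b) (tl B' y) := by
  set α := {p : ℕ × EllPt // p.1 ∈ B.1 ∧ p.2.1 ⊆ B.1 ∧ ¬ good D b p.2 ∧
      ¬ good D (insert p.1 b) p.2 ∧ ∀ m ∈ p.2.1, p.1 < m} with hα
  obtain ⟨n₀, hn₀B, B₁, hB₁s, hB₁bad⟩ := weak hbad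
  have hB₁B : B₁.1 ⊆ B.1 := hB₁s.trans (tl_subset _ _)
  have init : α := ⟨(n₀, B₁), hn₀B, hB₁B, not_good_mono hB₁B hbad, hB₁bad,
    fun m hm => lt_of_mem_tl (hB₁s hm)⟩
  have step : ∀ s : α, ∃ t : α, t.1.1 ∈ s.1.2.1 ∧ t.1.2.1 ⊆ s.1.2.1 := by
    rintro ⟨⟨n, E⟩, hnB, hEB, hEbad, hnEbad, habove⟩
    obtain ⟨n', hn'E, E₁, hE₁s, hE₁bad⟩ := weak hEbad
    have hE₁E : E₁.1 ⊆ E.1 := hE₁s.trans (tl_subset _ _)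
    exact ⟨⟨(n', E₁), hEB hn'E, hE₁E.trans hEB, not_good_mono hE₁E hEbad, hE₁bad,
      fun m hm => lt_of_mem_tl (hE₁s hm)⟩, hn'E, hE₁E⟩
  obtain ⟨f, hf0, hfR⟩ := dc _ init step
  set ν : ℕ → ℕ := fun k => (f k).1.1 with hνdef
  set E : ℕ → EllPt := fun k => (f k).1.2 with hEdef
  have hνB : ∀ k, ν k ∈ B.1 := fun k => (f k).2.1
  have hbadk : ∀ k, ¬ good D (insert (ν k) b) (E k) := fun k => (f k).2.2.2.2.1
  have habove : ∀ k, ∀ m ∈ (E k).1, ν k < m := fun k => (f k).2.2.2.2.2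
  have hRel1 : ∀ k, ν (k+1) ∈ (E k).1 := fun k => (hfR k).1
  have hRel2 : ∀ k, (E (k+1)).1 ⊆ (E k).1 := fun k => (hfR k).2
  have hmono : StrictMono ν :=
    strictMono_nat_of_lt_succ fun k => habove k _ (hRel1 k)
  have hanti : ∀ k j, k ≤ j → (E j).1 ⊆ (E k).1 := by
    intro k j hkj
    induction j, hkj using Nat.le_induction with
    | base => exact subset_rfl
    | succ j hkj ih => exact (hRel2 j).trans ih
  have hνE : ∀ k j, k < j → ν j ∈ (E k).1 := by
    intro k j h
    cases j with
    | zero => omega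
    | succ m => exact hanti k m (by omega) (hRel1 m)
  refine ⟨⟨Set.range ν, Set.infinite_range_of_injective hmono.injective⟩, ?_, ?_⟩
  · rintro _ ⟨k, rfl⟩; exact hνB k
  · rintro _ ⟨k, rfl⟩
    refine not_good_mono ?_ (hbadk k)
    rintro y ⟨⟨i, rfl⟩, hy2⟩
    have : ν k < ν i := lt_of_not_ge fun hle => hy2 hle
    exact hνE k i (hmono.lt_iff_lt.1 this)

lemma multi {D : Set EllPt} {B : EllPt} (S : Finset (Finset ℕ)) (h : ∀ c ∈ S, ¬ good D c B) :
    ∃ F : EllPt, F.1 ⊆ B.1 ∧ ∀ c ∈ S, ∀ n ∈ F.1, ¬ good D (insert n c) (tl F n) := by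
  induction S using Finset.induction_on with
  | empty => exact ⟨B, subset_rfl, by simp⟩
  | @insert c S hcS ih =>
    obtain ⟨F, hFB, hF⟩ := ih (fun c' hc' => h c' (Finset.mem_insert_of_mem hc'))
    obtain ⟨F', hF'F, hF'⟩ := strong (not_good_mono hFB (h c (Finset.mem_insert_self _ _)))
    refine ⟨F', hF'F.trans hFB, ?_⟩
    intro c' hc' n hn
    rcases Finset.mem_insert.1 hc' with rfl | hc'S
    · exact hF' n hn
    · exact not_good_mono (tl_mono hF'F n) (hF c' hc'S n (hF'F hn))

lemma dense_open_good {D : Set EllPt} (hO : IsOpen D) (hd : Dense D) (a : Finset ℕ) (A : EllPt) :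
    ∃ C : EllPt, C.1 ⊆ A.1 ∧ EBasic a C ⊆ D := by
  by_contra hbad
  have hbad : ¬ good D a A := hbad
  set α := {p : Finset ℕ × EllPt // p.2.1 ⊆ A.1 ∧ ∀ s ⊆ p.1, ¬ good D (a ∪ s) p.2} with hα
  have init : α := ⟨(∅, A), subset_rfl, fun s hs => by
    rw [Finset.subset_empty.1 hs, Finset.union_empty]; exact hbad⟩
  have step : ∀ s : α, ∃ t : α,
      ∃ n ∈ s.1.2.1, t.1.1 = insert n s.1.1 ∧ t.1.2.1 ⊆ (tl s.1.2 n).1 := by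
    rintro ⟨⟨t, E⟩, hEA, hinv⟩
    have hS : ∀ c ∈ t.powerset.image (fun s => a ∪ s), ¬ good D c E := by
      intro c hc
      simp only [Finset.mem_image, Finset.mem_powerset] at hc
      obtain ⟨s, hs, rfl⟩ := hc
      exact hinv s hs
    obtain ⟨F, hFE, hF⟩ := multi _ hS
    obtain ⟨n, hn⟩ := F.2.nonempty
    refine ⟨⟨(insert n t, tl F n), ((tl_subset F n).trans hFE).trans hEA, ?_⟩,
      n, hFE hn, rfl, tl_mono hFE n⟩
    intro s hs
    by_cases hns : n ∈ s
    · have hs' : s.erase n ⊆ t := Finset.subset_insert_iff.1 hs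
      have heq : a ∪ s = insert n (a ∪ s.erase n) := by
        rw [← Finset.union_insert, Finset.insert_erase hns]
      rw [heq]
      exact hF (a ∪ s.erase n)
        (Finset.mem_image.2 ⟨s.erase n, Finset.mem_powerset.2 hs', rfl⟩) n hn
    · have hs' : s ⊆ t := by
        have := Finset.subset_insert_iff.1 hs
        rwa [Finset.erase_eq_of_notMem hns] at this
      exact not_good_mono ((tl_subset F n).trans hFE) (hinv s hs')
  obtain ⟨f, hf0, hfR⟩ := dc _ init step
  set t : ℕ → Finset ℕ := fun k => (f k).1.1 with htdef
  set E : ℕ → EllPt := fun k => (f k).1.2 with hEdef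
  have hEA : ∀ k, (E k).1 ⊆ A.1 := fun k => (f k).2.1
  have hinv : ∀ k, ∀ s ⊆ t k, ¬ good D (a ∪ s) (E k) := fun k => (f k).2.2
  choose ν hν1 hν2 hν3 using hfR
  have hν2' : ∀ k, t (k+1) = insert (ν k) (t k) := hν2
  -- ν k ∈ (E k).1, t (k+1) = insert (ν k) (t k), (E (k+1)).1 ⊆ (tl (E k) (ν k)).1
  have hmono : StrictMono ν :=
    strictMono_nat_of_lt_succ fun k => lt_of_mem_tl (hν3 k (hν1 (k+1)))
  have hanti : ∀ k j, k ≤ j → (E j).1 ⊆ (E k).1 := by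
    intro k j hkj
    induction j, hkj using Nat.le_induction with
    | base => exact subset_rfl
    | succ j hkj ih => exact ((hν3 j).trans (tl_subset _ _)).trans ih
  have hνE : ∀ k i, k ≤ i → ν i ∈ (E k).1 := fun k i h => hanti k i h (hν1 i)
  have htmono : ∀ k j, k ≤ j → t k ⊆ t j := by
    intro k j hkj
    induction j, hkj using Nat.le_induction with
    | base => exact subset_rfl
    | succ j hkj ih => exact ih.trans (by rw [hν2' j]; exact Finset.subset_insert _ _)
  have hνt : ∀ i, ν i ∈ t (i+1) := fun i => by rw [hν2' i]; exact Finset.mem_insert_self _ _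
  set B : EllPt := ⟨Set.range ν, Set.infinite_range_of_injective hmono.injective⟩ with hB
  have hBA : B.1 ⊆ A.1 := by rintro _ ⟨i, rfl⟩; exact hEA i (hν1 i)
  obtain ⟨x, hxB, hxD⟩ := hd.inter_open_nonempty _ (isOpen_basic a B) (basic_nonempty a B)
  have hstem : Stem a x := ⟨hxB.1, hxB.2.2⟩
  obtain ⟨b, hab, hbstem, hbD⟩ := open_point hO hxD hstem
  set s : Finset ℕ := b \ a with hs
  have hsB : ∀ y ∈ s, y ∈ Set.range ν := by
    intro y hy
    have hyb : y ∈ b := (Finset.sdiff_subset hy)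
    have hya : y ∉ a := (Finset.mem_sdiff.1 hy).2
    rcases hxB.2.1 (hbstem.1 hyb) with h | h
    · exact absurd h hya
    · exact h
  obtain ⟨k, hsk, hk⟩ : ∃ k, s ⊆ t k ∧ ∀ i, (∀ m ∈ s, m < ν i) → k ≤ i := by
    rcases s.eq_empty_or_nonempty with he | hne
    · exact ⟨0, by simp [he, hf0], fun i _ => Nat.zero_le i⟩
    · obtain ⟨j, hj⟩ := hsB _ (s.max'_mem hne)
      refine ⟨j + 1, ?_, ?_⟩
      · intro y hy
        obtain ⟨i, hi⟩ := hsB y hy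
        have : ν i ≤ ν j := by rw [hi, hj]; exact Finset.le_max' s y hy
        have hij : i ≤ j := hmono.le_iff_le.1 this
        exact htmono (i+1) (j+1) (by omega) (hi ▸ hνt i)
      · intro i h
        have := h _ (s.max'_mem hne)
        rw [← hj] at this
        have := hmono.lt_iff_lt.1 this
        omega
  have hCE : (dif x b).1 ⊆ (E k).1 := by
    rintro y ⟨hyx, hyb⟩
    have hyB : y ∈ Set.range ν := by
      rcases hxB.2.1 hyx with h | h
      · exact absurd (hab h) (by exact_mod_cast hyb)
      · exact h
    obtain ⟨i, rfl⟩ := hyB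
    have hgt : ∀ m ∈ s, m < ν i := fun m hm =>
      hbstem.2 m (Finset.sdiff_subset hm) _ hyx (by exact_mod_cast hyb)
    exact hνE k i (hk i hgt)
  apply hinv k s hsk
  refine ⟨dif x b, hCE, ?_⟩
  rw [hs, Finset.union_sdiff_of_subset hab]
  exact hbD

end EllAux

/-- A subset of the Ellentuck space is nowhere dense iff it is Ramsey null:
for every nonempty basic set `[a, A]` there is `B ∈ [A]^ω` with `[a, B] ∩ X = ∅`. -/
theorem stmt12 (X : Set EllPt) :
    IsNowhereDense X ↔
      ∀ (a : Finset ℕ) (A : EllPt), (EBasic a A).Nonempty →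
        ∃ B : EllPt, B.1 ⊆ A.1 ∧ EBasic a B ∩ X = ∅ := by
  constructor
  · intro hX a A _
    have hO : IsOpen (closure X)ᶜ := isClosed_closure.isOpen_compl
    have hd : Dense (closure X)ᶜ := interior_eq_empty_iff_dense_compl.1 hX
    obtain ⟨C, hCA, hCD⟩ := EllAux.dense_open_good hO hd a A
    refine ⟨C, hCA, ?_⟩
    rw [Set.eq_empty_iff_forall_notMem]
    rintro y ⟨hy1, hy2⟩
    exact hCD hy1 (subset_closure hy2)
  · intro h
    rw [IsNowhereDense, Set.eq_empty_iff_forall_notMem]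
    intro x hx
    obtain ⟨t, ⟨a, A, rfl⟩, hxt, hts⟩ := EllAux.isBasis.isOpen_iff.1 isOpen_interior x hx
    obtain ⟨B, hBA, hBX⟩ := h a A (EllAux.basic_nonempty a A)
    obtain ⟨y, hy⟩ := EllAux.basic_nonempty a B
    have hyc : y ∈ closure X := interior_subset (hts (EllAux.basic_mono hBA hy))
    have hne := (mem_closure_iff.1 hyc) (EBasic a B) (EllAux.isOpen_basic a B) hy
    rw [hBX] at hne
    exact Set.not_nonempty_empty hne
end
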